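/- For any number of agents with binary valuations over a finite set of indivisible items, a complete EFX allocation always exists. -/

import Mathlib

open Finset

section
variable {α : Type*} [DecidableEq α]

/-- monotonicity from binary marginals -/
lemma bv_mono (M : Finset α) (v1 : Finset α → ℕ)
    (hv : ∀ S ⊆ M, ∀ g ∈ M, g ∉ S → v1 (insert g S) = v1 S ∨ v1 (insert g S) = v1 S + 1) :
    ∀ (d : ℕ) (S T : Finset α), S ⊆ T → T ⊆ M → (T \ S).card = d → v1 S ≤ v1 T := by
  intro d
  induction d with
  | zero =>
    intro S T hST hTM hc
    have : T \ S = ∅ := card_eq_zero.mp hc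
    have hTS : T ⊆ S := by
      intro x hx
      by_contra hxs
      exact absurd (mem_sdiff.mpr ⟨hx, hxs⟩) (by simp [this])
    have : S = T := Subset.antisymm hST hTS
    simp [this]
  | succ d ih =>
    intro S T hST hTM hc
    have hne : (T \ S).Nonempty := by
      rw [← card_pos, hc]; omega
    obtain ⟨x, hx⟩ := hne
    have hxT : x ∈ T := (mem_sdiff.mp hx).1
    have hxS : x ∉ S := (mem_sdiff.mp hx).2
    have hSM : S ⊆ M := hST.trans hTM
    have h1 : v1 S ≤ v1 (insert x S) := by
      rcases hv S hSM x (hTM hxT) hxS with h | h <;> omega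
    have h2 : v1 (insert x S) ≤ v1 T := by
      apply ih (insert x S) T (insert_subset hxT hST) hTM
      rw [sdiff_insert]
      rw [card_erase_of_mem hx, hc]
      omega
    omega

lemma bv_mono' (M : Finset α) (v1 : Finset α → ℕ)
    (hv : ∀ S ⊆ M, ∀ g ∈ M, g ∉ S → v1 (insert g S) = v1 S ∨ v1 (insert g S) = v1 S + 1)
    {S T : Finset α} (hST : S ⊆ T) (hTM : T ⊆ M) : v1 S ≤ v1 T :=
  bv_mono M v1 hv _ S T hST hTM rfl

lemma bv_erase (M : Finset α) (v1 : Finset α → ℕ)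
    (hv : ∀ S ⊆ M, ∀ g ∈ M, g ∉ S → v1 (insert g S) = v1 S ∨ v1 (insert g S) = v1 S + 1)
    {T : Finset α} (hTM : T ⊆ M) (g : α) : v1 T ≤ v1 (T.erase g) + 1 := by
  by_cases hg : g ∈ T
  · have h1 : T.erase g ⊆ M := (erase_subset _ _).trans hTM
    have := hv (T.erase g) h1 g (hTM hg) (notMem_erase _ _)
    rw [insert_erase hg] at this
    rcases this with h | h <;> omega
  · rw [erase_eq_of_notMem hg]; omega

lemma bv_card (M : Finset α) (v1 : Finset α → ℕ) (h0 : v1 ∅ = 0)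
    (hv : ∀ S ⊆ M, ∀ g ∈ M, g ∉ S → v1 (insert g S) = v1 S ∨ v1 (insert g S) = v1 S + 1)
    : ∀ (S : Finset α), S ⊆ M → v1 S ≤ S.card := by
  intro S
  induction S using Finset.induction_on with
  | empty => simp [h0]
  | insert a s hx ih =>
    intro hM
    have hsM : s ⊆ M := (subset_insert _ _).trans hM
    have haM : a ∈ M := hM (mem_insert_self _ _)
    have := hv s hsM a haM hx
    rw [card_insert_of_notMem hx]
    rcases this with h | h <;> (rw [h]; have := ih hsM; omega)

/-- minimal witness extraction -/
lemma exists_minimal_subset (Q : Finset α → Prop) :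
    ∀ (N : ℕ) (T : Finset α), T.card ≤ N → Q T →
    ∃ S, S ⊆ T ∧ Q S ∧ ∀ T', T' ⊆ S → T' ≠ S → ¬ Q T' := by
  intro N
  induction N with
  | zero =>
    intro T hT hQ
    refine ⟨T, Subset.rfl, hQ, ?_⟩
    intro T' hT' hne
    have : T = ∅ := card_eq_zero.mp (Nat.le_zero.mp hT)
    subst this
    exact absurd (subset_empty.mp hT') hne
  | succ N ih =>
    intro T hT hQ
    by_cases h : ∃ T', T' ⊆ T ∧ T' ≠ T ∧ Q T'
    · obtain ⟨T', hsub, hne, hQ'⟩ := h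
      have hss : T' ⊂ T := Finset.ssubset_iff_subset_ne.mpr ⟨hsub, hne⟩
      have : T'.card ≤ N := by
        have := card_lt_card hss
        omega
      obtain ⟨S, h1, h2, h3⟩ := ih T' this hQ'
      exact ⟨S, h1.trans hsub, h2, h3⟩
    · push_neg at h
      refine ⟨T, Subset.rfl, hQ, ?_⟩
      intro T' hT' hne hQ'
      exact (h T' hT' hne) hQ'

/-- a minimal nonempty e-closed set; on it e is surjective -/
lemma exists_cycle {n : ℕ} (hn : 0 < n) (e : Fin n → Fin n) :
    ∃ C : Finset (Fin n), C.Nonempty ∧ (∀ x ∈ C, e x ∈ C) ∧ ∀ y ∈ C, ∃ x ∈ C, e x = y := by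
  haveI : NeZero n := ⟨hn.ne'⟩
  classical
  let 𝒮 : Finset (Finset (Fin n)) := univ.powerset.filter fun C => C.Nonempty ∧ ∀ x ∈ C, e x ∈ C
  have huniv : (univ : Finset (Fin n)) ∈ 𝒮 := by
    simp only [𝒮, mem_filter, mem_powerset]
    exact ⟨Subset.rfl, univ_nonempty, fun x _ => mem_univ _⟩
  obtain ⟨C, hC𝒮, hmin⟩ := 𝒮.exists_min_image card ⟨univ, huniv⟩
  simp only [𝒮, mem_filter, mem_powerset] at hC𝒮
  obtain ⟨-, hCne, hCcl⟩ := hC𝒮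
  have himg_sub : C.image e ⊆ C := by
    intro x hx
    obtain ⟨y, hy, rfl⟩ := mem_image.mp hx
    exact hCcl y hy
  have himg𝒮 : C.image e ∈ 𝒮 := by
    simp only [𝒮, mem_filter, mem_powerset]
    refine ⟨subset_univ _, hCne.image e, ?_⟩
    intro x hx
    exact mem_image_of_mem e (himg_sub hx)
  have hcard := hmin _ himg𝒮
  have heq : C.image e = C := eq_of_subset_of_card_le himg_sub hcard
  refine ⟨C, hCne, hCcl, ?_⟩
  intro y hy
  rw [← heq] at hy
  obtain ⟨x, hx, hxy⟩ := mem_image.mp hy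
  exact ⟨x, hx, hxy⟩

end

section Main
variable {α : Type*} [DecidableEq α] {n : ℕ} (M : Finset α) (v : Fin n → Finset α → ℕ)

/-- partial EFX allocation predicate -/
def GoodAlloc (A : Fin n → Finset α) : Prop :=
  (∀ i, A i ⊆ M) ∧ (∀ i j, i ≠ j → Disjoint (A i) (A j)) ∧
  (∀ i k : Fin n, ∀ g ∈ A k, v i ((A k).erase g) ≤ v i (A i))

def PhiAlloc (A : Fin n → Finset α) : ℕ :=
  (M.card + 1) * (∑ i, v i (A i)) + ∑ i, (A i).card

lemma sum_card_le_of_good {A : Fin n → Finset α} (hG : GoodAlloc M v A) :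
    ∑ i, (A i).card ≤ M.card := by
  classical
  have h := Finset.card_biUnion (s := (univ : Finset (Fin n))) (t := A)
    (fun x _ y _ hxy => hG.2.1 x y hxy)
  rw [← h]
  exact card_le_card (by intro x hx; obtain ⟨i, _, hi⟩ := mem_biUnion.mp hx; exact hG.1 i hi)

lemma step_lemma (hn : 0 < n)
    (hbin : ∀ i : Fin n, v i ∅ = 0 ∧ ∀ S ⊆ M, ∀ g ∈ M, g ∉ S →
      v i (insert g S) = v i S ∨ v i (insert g S) = v i S + 1)
    (A : Fin n → Finset α) (hG : GoodAlloc M v A)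
    (p : α) (hpM : p ∈ M) (hp : ∀ k, p ∉ A k) :
    ∃ B, GoodAlloc M v B ∧ PhiAlloc M v A < PhiAlloc M v B := by
  classical
  obtain ⟨hAM, hAdisj, hAefx⟩ := hG
  have hins_sub : ∀ l : Fin n, insert p (A l) ⊆ M := fun l => insert_subset hpM (hAM l)
  have hmono : ∀ (i : Fin n) (S T : Finset α), S ⊆ T → T ⊆ M → v i S ≤ v i T :=
    fun i S T hST hTM => bv_mono' M (v i) (hbin i).2 hST hTM
  by_cases hcase1 : ∃ l : Fin n, ∀ T ⊆ insert p (A l), ∀ k, v k T ≤ v k (A k)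
  · -- Case 1 : place p on agent l
    obtain ⟨l, hl⟩ := hcase1
    refine ⟨Function.update A l (insert p (A l)), ?_, ?_⟩
    · have hBge : ∀ i, v i (A i) ≤ v i (Function.update A l (insert p (A l)) i) := by
        intro i
        by_cases hi : i = l
        · subst hi; rw [Function.update_self]
          exact hmono i _ _ (subset_insert _ _) (hins_sub i)
        · rw [Function.update_of_ne hi]
      refine ⟨?_, ?_, ?_⟩
      · intro i
        by_cases hi : i = l
        · subst hi; rw [Function.update_self]; exact hins_sub i
        · rw [Function.update_of_ne hi]; exact hAM i
      · intro i j hij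
        by_cases hi : i = l
        · subst hi
          rw [Function.update_self, Function.update_of_ne (fun h => hij h.symm),
            disjoint_insert_left]
          exact ⟨hp j, hAdisj _ _ hij⟩
        · rw [Function.update_of_ne hi]
          by_cases hj : j = l
          · subst hj
            rw [Function.update_self, disjoint_insert_right]
            exact ⟨hp i, hAdisj i j hij⟩
          · rw [Function.update_of_ne hj]; exact hAdisj i j hij
      · intro i k g hg
        refine le_trans ?_ (hBge i)
        by_cases hk : k = l
        · subst hk
          rw [Function.update_self] at hg ⊢
          exact hl _ (erase_subset _ _) i
        · rw [Function.update_of_ne hk] at hg ⊢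
          exact hAefx i k g hg
    · -- potential increases
      have hW : ∑ i, v i (A i) ≤ ∑ i, v i (Function.update A l (insert p (A l)) i) := by
        apply Finset.sum_le_sum
        intro i _
        by_cases hi : i = l
        · subst hi; rw [Function.update_self]
          exact hmono i _ _ (subset_insert _ _) (hins_sub i)
        · rw [Function.update_of_ne hi]
      have hcard : ∑ i, (A i).card + 1
          = ∑ i, ((Function.update A l (insert p (A l)) i).card) := by
        have h1 : (fun i => (Function.update A l (insert p (A l)) i).card)
            = Function.update (fun i => (A i).card) l ((A l).card + 1) := by
          funext i
          by_cases hi : i = l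
          · subst hi; simp [Function.update_self, card_insert_of_notMem (hp i)]
          · simp [Function.update_of_ne hi]
        rw [h1, Finset.sum_update_of_mem (mem_univ l)]
        rw [← Finset.add_sum_erase _ _ (mem_univ l), Finset.erase_eq]
        omega
      have := Nat.mul_le_mul_left (M.card + 1) hW
      unfold PhiAlloc
      omega
  · -- Case 2
    push_neg at hcase1
    have hSex : ∀ l : Fin n, ∃ S, S ⊆ insert p (A l) ∧ (∃ k, v k (A k) < v k S) ∧
        ∀ T', T' ⊆ S → T' ≠ S → ∀ k, v k T' ≤ v k (A k) := by
      intro l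
      obtain ⟨T, hT, k, hk⟩ := hcase1 l
      obtain ⟨S, hS1, hS2, hS3⟩ := exists_minimal_subset
        (fun T => ∃ k, v k (A k) < v k T) T.card T le_rfl ⟨k, hk⟩
      refine ⟨S, hS1.trans hT, hS2, ?_⟩
      intro T' h1 h2 k'
      by_contra hlt
      exact hS3 T' h1 h2 ⟨k', by omega⟩
    choose S hSsub hSenv hSmin using hSex
    have hSM : ∀ l, S l ⊆ M := fun l => (hSsub l).trans (hins_sub l)
    by_cases hcase2b : ∃ l, v l (A l) < v l (S l)
    · -- Case 2b : self improvement
      obtain ⟨l, hl⟩ := hcase2b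
      refine ⟨Function.update A l (S l), ?_, ?_⟩
      · have hBge : ∀ i, v i (A i) ≤ v i (Function.update A l (S l) i) := by
          intro i
          by_cases hi : i = l
          · subst hi; rw [Function.update_self]; exact le_of_lt hl
          · rw [Function.update_of_ne hi]
        refine ⟨?_, ?_, ?_⟩
        · intro i
          by_cases hi : i = l
          · subst hi; rw [Function.update_self]; exact hSM i
          · rw [Function.update_of_ne hi]; exact hAM i
        · intro i j hij
          have hSd : ∀ j, j ≠ l → Disjoint (S l) (A j) := by
            intro j hj
            rw [disjoint_left]
            intro x hx hxj
            rcases mem_insert.mp (hSsub l hx) with h | h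
            · exact hp j (h ▸ hxj)
            · exact (disjoint_left.mp (hAdisj l j (fun h' => hj h'.symm))) h hxj
          by_cases hi : i = l
          · subst hi
            rw [Function.update_self, Function.update_of_ne (fun h => hij h.symm)]
            exact hSd j (fun h => hij h.symm)
          · rw [Function.update_of_ne hi]
            by_cases hj : j = l
            · subst hj; rw [Function.update_self]
              exact (hSd i hi).symm
            · rw [Function.update_of_ne hj]; exact hAdisj i j hij
        · intro i k g hg
          refine le_trans ?_ (hBge i)
          by_cases hk : k = l
          · subst hk
            rw [Function.update_self] at hg ⊢
            refine hSmin k _ (erase_subset _ _) ?_ i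
            intro h
            exact (notMem_erase g _) (h ▸ hg)
          · rw [Function.update_of_ne hk] at hg ⊢
            exact hAefx i k g hg
      · have hW : ∑ i, v i (A i) + 1 ≤ ∑ i, v i (Function.update A l (S l) i) := by
          have := Finset.sum_lt_sum (s := (univ : Finset (Fin n)))
            (f := fun i => v i (A i)) (g := fun i => v i (Function.update A l (S l) i))
            (by
              intro i _
              by_cases hi : i = l
              · subst hi; rw [Function.update_self]; exact le_of_lt hl
              · rw [Function.update_of_ne hi])
            ⟨l, mem_univ l, by rw [Function.update_self]; exact hl⟩
          omega
        have hs := sum_card_le_of_good M v ⟨hAM, hAdisj, hAefx⟩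
        have := Nat.mul_le_mul_left (M.card + 1) hW
        unfold PhiAlloc
        nlinarith [Nat.zero_le (∑ i, ((Function.update A l (S l) i).card))]
    · -- Case 2c : rotation along a cycle
      push_neg at hcase2b
      set e : Fin n → Fin n := fun l => (hSenv l).choose with he_def
      have hSenvl : ∀ l, v (e l) (A (e l)) < v (e l) (S l) := fun l => (hSenv l).choose_spec
      have he : ∀ l, e l ≠ l := by
        intro l h
        have := hSenvl l
        rw [h] at this
        exact absurd this (not_lt.mpr (hcase2b l))
      obtain ⟨C, hCne, hCcl, hCsurj⟩ := exists_cycle hn e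
      set einv : Fin n → Fin n := fun y => if h : ∃ x ∈ C, e x = y then h.choose else y
        with heinv_def
      have heinv : ∀ y ∈ C, einv y ∈ C ∧ e (einv y) = y := by
        intro y hy
        have h : ∃ x ∈ C, e x = y := hCsurj y hy
        simp only [heinv_def, dif_pos h]
        exact h.choose_spec
      obtain ⟨c₀, hc₀⟩ := hCne
      have hec₀ : e c₀ ∈ C := hCcl c₀ hc₀
      set B : Fin n → Finset α :=
        fun k => if k ∈ C then (if k = e c₀ then S c₀ else (S (einv k)).erase p) else A k
        with hB_def
      have hBnotC : ∀ k, k ∉ C → B k = A k := by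
        intro k hk; simp only [hB_def, if_neg hk]
      have hBec₀ : B (e c₀) = S c₀ := by
        simp [hB_def, hec₀]
      have hBC : ∀ k ∈ C, k ≠ e c₀ → B k = (S (einv k)).erase p := by
        intro k hk hkne; simp only [hB_def, if_pos hk, if_neg hkne]
      -- F1
      have hF1 : ∀ i, v i (A i) ≤ v i (B i) := by
        intro i
        by_cases hiC : i ∈ C
        · by_cases hie : i = e c₀
          · subst hie
            rw [hBec₀]
            exact le_of_lt (hSenvl c₀)
          · rw [hBC i hiC hie]
            obtain ⟨hl1, hl2⟩ := heinv i hiC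
            have h1 : v i (A i) < v i (S (einv i)) := by
              have := hSenvl (einv i); rw [hl2] at this; exact this
            have h2 : v i (S (einv i)) ≤ v i ((S (einv i)).erase p) + 1 :=
              bv_erase M (v i) (hbin i).2 (hSM (einv i)) p
            omega
        · rw [hBnotC i hiC]
      have hF1s : v (e c₀) (A (e c₀)) < v (e c₀) (B (e c₀)) := by
        rw [hBec₀]; exact hSenvl c₀
      -- membership structure
      have hSmem : ∀ l, ∀ x ∈ S l, x = p ∨ x ∈ A l := by
        intro l x hx; exact mem_insert.mp (hSsub l hx)
      -- B k subset facts
      have hBsubM : ∀ k, B k ⊆ M := by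
        intro k
        by_cases hkC : k ∈ C
        · by_cases hke : k = e c₀
          · subst hke; rw [hBec₀]; exact hSM c₀
          · rw [hBC k hkC hke]; exact (erase_subset _ _).trans (hSM _)
        · rw [hBnotC k hkC]; exact hAM k
      -- ownership function for disjointness
      have hown : ∀ k x, x ∈ B k → x ≠ p →
          x ∈ A (if k ∈ C then (if k = e c₀ then c₀ else einv k) else k) := by
        intro k x hx hxp
        by_cases hkC : k ∈ C
        · by_cases hke : k = e c₀
          · subst hke
            rw [hBec₀] at hx
            rw [if_pos hec₀, if_pos rfl]
            rcases hSmem c₀ x hx with h | h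
            · exact absurd h hxp
            · exact h
          · rw [hBC k hkC hke] at hx
            rw [if_pos hkC, if_neg hke]
            rcases hSmem (einv k) x (mem_of_mem_erase hx) with h | h
            · exact absurd h hxp
            · exact h
        · rw [hBnotC k hkC] at hx
          rw [if_neg hkC]
          exact hx
      have hown_inj : ∀ i j : Fin n, i ≠ j →
          (if i ∈ C then (if i = e c₀ then c₀ else einv i) else i)
          ≠ (if j ∈ C then (if j = e c₀ then c₀ else einv j) else j) := by
        intro i j hij
        by_cases hiC : i ∈ C <;> by_cases hjC : j ∈ C
        · rw [if_pos hiC, if_pos hjC]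
          by_cases hie : i = e c₀ <;> by_cases hje : j = e c₀
          · exact absurd (hie.trans hje.symm) hij
          · rw [if_pos hie, if_neg hje]
            intro h
            apply hje
            rw [← (heinv j hjC).2, ← h]
          · rw [if_neg hie, if_pos hje]
            intro h
            apply hie
            rw [← (heinv i hiC).2, h]
          · rw [if_neg hie, if_neg hje]
            intro h
            apply hij
            rw [← (heinv i hiC).2, ← (heinv j hjC).2, h]
        · rw [if_pos hiC, if_neg hjC]
          by_cases hie : i = e c₀
          · rw [if_pos hie]; intro h; exact hjC (h ▸ hc₀)
          · rw [if_neg hie]; intro h; exact hjC (h ▸ (heinv i hiC).1)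
        · rw [if_neg hiC, if_pos hjC]
          by_cases hje : j = e c₀
          · rw [if_pos hje]; intro h; exact hiC (h ▸ hc₀)
          · rw [if_neg hje]; intro h; exact hiC (h ▸ (heinv j hjC).1)
        · rw [if_neg hiC, if_neg hjC]; exact hij
      have hp_only : ∀ k, p ∈ B k → k = e c₀ := by
        intro k hk
        by_cases hkC : k ∈ C
        · by_cases hke : k = e c₀
          · exact hke
          · rw [hBC k hkC hke] at hk
            exact absurd hk (notMem_erase _ _)
        · rw [hBnotC k hkC] at hk
          exact absurd hk (hp k)
      -- EFX for B
      have hF2 : ∀ (i k : Fin n), ∀ g ∈ B k, v i ((B k).erase g) ≤ v i (A i) := by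
        intro i k g hg
        by_cases hkC : k ∈ C
        · have hsub : ∃ l, B k ⊆ S l := by
            by_cases hke : k = e c₀
            · exact ⟨c₀, by rw [hke, hBec₀]⟩
            · exact ⟨einv k, by rw [hBC k hkC hke]; exact erase_subset _ _⟩
          obtain ⟨l, hsub⟩ := hsub
          have hT' : (B k).erase g ⊆ S l := (erase_subset _ _).trans hsub
          have hT'ne : (B k).erase g ≠ S l := by
            intro h
            have : g ∈ (B k).erase g := h ▸ (hsub hg)
            exact (notMem_erase g _) this
          exact hSmin l _ hT' hT'ne i
        · rw [hBnotC k hkC] at hg ⊢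
          exact hAefx i k g hg
      refine ⟨B, ⟨hBsubM, ?_, fun i k g hg => le_trans (hF2 i k g hg) (hF1 i)⟩, ?_⟩
      · -- disjointness
        intro i j hij
        rw [disjoint_left]
        intro x hxi hxj
        by_cases hxp : x = p
        · subst hxp
          exact hij ((hp_only i hxi).trans (hp_only j hxj).symm)
        · have h1 := hown i x hxi hxp
          have h2 := hown j x hxj hxp
          exact (disjoint_left.mp (hAdisj _ _ (hown_inj i j hij))) h1 h2
      · -- potential
        have hW : ∑ i, v i (A i) + 1 ≤ ∑ i, v i (B i) := by
          have := Finset.sum_lt_sum (s := (univ : Finset (Fin n)))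
            (f := fun i => v i (A i)) (g := fun i => v i (B i))
            (fun i _ => hF1 i) ⟨e c₀, mem_univ _, hF1s⟩
          omega
        have hs := sum_card_le_of_good M v ⟨hAM, hAdisj, hAefx⟩
        have := Nat.mul_le_mul_left (M.card + 1) hW
        unfold PhiAlloc
        nlinarith [Nat.zero_le (∑ i, (B i).card)]

end Main

section Final
variable {α : Type*} [DecidableEq α]

lemma exists_complete_good {n : ℕ} (hn : 0 < n) (M : Finset α) (v : Fin n → Finset α → ℕ)
    (hbin : ∀ i : Fin n, v i ∅ = 0 ∧ ∀ S ⊆ M, ∀ g ∈ M, g ∉ S →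
      v i (insert g S) = v i S ∨ v i (insert g S) = v i S + 1) :
    ∃ B : Fin n → Finset α, GoodAlloc M v B ∧ Finset.univ.biUnion B = M := by
  classical
  set B₀ : ℕ := (M.card + 1) * (n * M.card) + M.card with hB₀
  have hbound : ∀ A : Fin n → Finset α, GoodAlloc M v A → PhiAlloc M v A ≤ B₀ := by
    intro A hA
    have h1 : ∑ i, v i (A i) ≤ n * M.card := by
      calc ∑ i, v i (A i) ≤ ∑ _i : Fin n, M.card := by
            apply Finset.sum_le_sum
            intro i _
            exact le_trans (bv_card M (v i) (hbin i).1 (hbin i).2 (A i) (hA.1 i))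
              (card_le_card (hA.1 i))
        _ = n * M.card := by simp [Finset.sum_const, mul_comm]
    have h2 := sum_card_le_of_good M v hA
    have := Nat.mul_le_mul_left (M.card + 1) h1
    unfold PhiAlloc
    omega
  have key : ∀ (k : ℕ) (A : Fin n → Finset α), GoodAlloc M v A →
      B₀ + 1 ≤ PhiAlloc M v A + k →
      ∃ B : Fin n → Finset α, GoodAlloc M v B ∧ Finset.univ.biUnion B = M := by
    intro k
    induction k with
    | zero =>
      intro A hA hk
      have := hbound A hA
      omega
    | succ k ih =>
      intro A hA hk
      rcases (M \ Finset.univ.biUnion A).eq_empty_or_nonempty with hem | ⟨p, hpmem⟩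
      · refine ⟨A, hA, ?_⟩
        apply Subset.antisymm
        · intro x hx
          obtain ⟨i, _, hi⟩ := mem_biUnion.mp hx
          exact hA.1 i hi
        · exact sdiff_eq_empty_iff_subset.mp hem
      · have hpM : p ∈ M := (mem_sdiff.mp hpmem).1
        have hpA : ∀ j, p ∉ A j := by
          intro j hj
          exact (mem_sdiff.mp hpmem).2 (mem_biUnion.mpr ⟨j, mem_univ _, hj⟩)
        obtain ⟨B, hB, hlt⟩ := step_lemma M v hn hbin A hA p hpM hpA
        exact ih B hB (by omega)
  apply key (B₀ + 1) (fun _ => ∅)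
  · refine ⟨fun i => empty_subset M, fun i j _ => by simp, ?_⟩
    intro i k g hg
    exact absurd hg (notMem_empty g)
  · omega

end Final

/-- main theorem: for any number of agents with binary valuations over
a finite set of items, a complete EFX allocation exists. -/
theorem efx_allocation_exists_binary {α : Type*} [DecidableEq α]
    (n : ℕ) (hn : 0 < n) (M : Finset α)
    (v : Fin n → Finset α → ℕ)
    (hbin : ∀ i : Fin n, v i ∅ = 0 ∧ ∀ S ⊆ M, ∀ g ∈ M, g ∉ S →
      v i (insert g S) = v i S ∨ v i (insert g S) = v i S + 1) :
    ∃ A : Fin n → Finset α,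
      (∀ i j : Fin n, i ≠ j → Disjoint (A i) (A j)) ∧
      Finset.univ.biUnion A = M ∧
      (∀ i j : Fin n, ∀ g ∈ A j, v i ((A j).erase g) ≤ v i (A i)) := by
  obtain ⟨B, hB, hBM⟩ := exists_complete_good hn M v hbin
  exact ⟨B, hB.2.1, hBM, fun i j g hg => hB.2.2 i j g hg⟩
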